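/- Let {X_i}_{i≥1} be independent, identically distributed random variables with values in the positive integers whose common distribution has support with greatest common divisor 1 and satisfies E[X] < 2, and let W_n = X_1 + ... + X_n. Then almost surely the sequence {W_n}_{n≥1} is asymptotically 2-complete, i.e., almost surely every sufficiently large positive integer can be written as W_i + W_j for some i ≠ j. -/

import Mathlib

open MeasureTheory ProbabilityTheory Filter Topology

/-- Deterministic pigeonhole lemma: a strictly increasing sequence of naturals with
upper density strictly greater than 1/2 is asymptotically 2-complete. -/
lemma key_det (w : ℕ → ℕ) (hsm : StrictMono w) (hge : ∀ n, n ≤ w n)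
    (c : ℝ) (hc2 : c < 2) (hc0 : 0 ≤ c) (n0 : ℕ) (hn01 : 1 ≤ n0)
    (hbound : ∀ n, n0 ≤ n → (w n : ℝ) ≤ c * n) :
    ∃ N : ℕ, ∀ m : ℕ, N ≤ m →
      ∃ i j : ℕ, 1 ≤ i ∧ 1 ≤ j ∧ i ≠ j ∧ w i + w j = m := by
  refine ⟨max (⌈(2 + c + 2*c*n0)/(2-c)⌉₊ + 1) (2*n0+10), fun m hm => ?_⟩
  have hm1 : 2*n0 + 10 ≤ m := le_trans (le_max_right _ _) hm
  have hm2 : ((2 + c + 2*c*n0)/(2-c) : ℝ) ≤ m := by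
    have h1 : ⌈(2 + c + 2*c*n0)/(2-c)⌉₊ + 1 ≤ m := le_trans (le_max_left _ _) hm
    calc ((2 + c + 2*c*n0)/(2-c) : ℝ) ≤ (⌈(2 + c + 2*c*n0)/(2-c)⌉₊ : ℝ) := Nat.le_ceil _
      _ ≤ m := by exact_mod_cast by omega
  obtain ⟨K, hK⟩ : ∃ K, K = (m+1)/2 + n0 := ⟨_, rfl⟩
  -- bound on elements
  have hwK : ∀ n ∈ Finset.Icc n0 K, w n ≤ m - 1 := by
    intro n hn
    rw [Finset.mem_Icc] at hn
    have h1 : (w n : ℝ) ≤ c * n := hbound n hn.1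
    have h2 : (n : ℝ) ≤ K := by exact_mod_cast hn.2
    have h3 : (K : ℝ) ≤ ((m:ℝ)+1)/2 + n0 := by
      have hd := Nat.cast_div_le (m := m+1) (n := 2) (α := ℝ)
      push_cast at hd
      rw [hK]
      push_cast
      linarith
    have h4 : c * ((((m:ℝ)+1)/2) + n0) ≤ (m:ℝ) - 1 := by
      have h5 : (2 + c + 2*c*n0 : ℝ) ≤ (2-c) * m := by
        rw [div_le_iff₀ (by linarith)] at hm2; linarith [hm2]
      nlinarith
    have h6 : (w n : ℝ) ≤ (m:ℝ) - 1 := by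
      calc (w n : ℝ) ≤ c * n := h1
        _ ≤ c * K := by nlinarith
        _ ≤ c * (((m:ℝ)+1)/2 + n0) := by nlinarith
        _ ≤ (m:ℝ) - 1 := h4
    have h7 : ((m - 1 : ℕ) : ℝ) = (m:ℝ) - 1 := by
      have : 1 ≤ m := by omega
      push_cast [this]; ring
    rw [← h7] at h6
    exact_mod_cast h6
  -- the sets
  set A := (Finset.Icc n0 K).image w with hA
  have hAsub : A ⊆ Finset.Icc 1 (m-1) := by
    intro a ha
    rw [hA, Finset.mem_image] at ha
    obtain ⟨n, hn, rfl⟩ := ha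
    rw [Finset.mem_Icc]
    refine ⟨?_, hwK n hn⟩
    rw [Finset.mem_Icc] at hn
    have := hge n
    omega
  have hAcard : A.card = K - n0 + 1 := by
    rw [hA, Finset.card_image_of_injective _ hsm.injective, Nat.card_Icc]
    omega
  set B := A.image (fun a => m - a) with hB
  have hBsub : B ⊆ Finset.Icc 1 (m-1) := by
    intro b hb
    rw [hB, Finset.mem_image] at hb
    obtain ⟨a, ha, rfl⟩ := hb
    have := Finset.mem_Icc.mp (hAsub ha)
    rw [Finset.mem_Icc]
    omega
  have hBcard : B.card = A.card := by
    rw [hB]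
    apply Finset.card_image_of_injOn
    intro a ha b hb hab
    have h1 := Finset.mem_Icc.mp (hAsub ha)
    have h2 := Finset.mem_Icc.mp (hAsub hb)
    have hab' : m - a = m - b := hab
    omega
  have hunion : (A ∪ B).card ≤ m - 1 := by
    calc (A ∪ B).card ≤ (Finset.Icc 1 (m-1)).card :=
      Finset.card_le_card (Finset.union_subset hAsub hBsub)
      _ = m - 1 := by rw [Nat.card_Icc]; omega
  have hinter : 2 ≤ (A ∩ B).card := by
    have h := Finset.card_union_add_card_inter A B
    have h2 : 2 * ((m+1)/2) ≥ m := by omega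
    omega
  obtain ⟨a, ha, b, hb, hab⟩ := Finset.one_lt_card.mp (by omega : 1 < (A ∩ B).card)
  -- membership facts
  have key : ∀ x ∈ A ∩ B, (∃ n, n0 ≤ n ∧ w n = x) ∧ (∃ n, n0 ≤ n ∧ w n = m - x) ∧
      1 ≤ x ∧ x ≤ m - 1 := by
    intro x hx
    rw [Finset.mem_inter] at hx
    obtain ⟨hxA, hxB⟩ := hx
    have hxr := Finset.mem_Icc.mp (hAsub hxA)
    rw [hA, Finset.mem_image] at hxA
    obtain ⟨n, hn, hwn⟩ := hxA
    rw [hB, Finset.mem_image] at hxB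
    obtain ⟨a', ha', haa⟩ := hxB
    have ha'r := Finset.mem_Icc.mp (hAsub ha')
    have hma : m - x = a' := by omega
    rw [hA, Finset.mem_image] at ha'
    obtain ⟨n', hn', hwn'⟩ := ha'
    rw [Finset.mem_Icc] at hn hn'
    exact ⟨⟨n, hn.1, hwn⟩, ⟨n', hn'.1, by omega⟩, hxr.1, hxr.2⟩
  obtain ⟨⟨i, hi, hwi⟩, ⟨j, hj, hwj⟩, hx1, hx2⟩ := key a ha
  obtain ⟨⟨i', hi', hwi'⟩, ⟨j', hj', hwj'⟩, hx1', hx2'⟩ := key b hb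
  by_cases hc : a ≠ m - a
  · refine ⟨i, j, by omega, by omega, ?_, by omega⟩
    intro h; rw [h] at hwi; omega
  · -- then b ≠ m - b, since a = m-a and b = m-b would force a = b
    push_neg at hc
    have hcb : b ≠ m - b := by omega
    refine ⟨i', j', by omega, by omega, ?_, by omega⟩
    intro h; rw [h] at hwi'; omega

/-- If the i.i.d. positive integer gaps have support with gcd 1 and expectation
strictly less than `2`, then almost surely the weight sequence is asymptotically
2-complete: every sufficiently large integer is the sum of two distinct weights. -/
theorem stmt3
    {Ω : Type*} [MeasurableSpace Ω] (μ : Measure Ω) [IsProbabilityMeasure μ]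
    (X : ℕ → Ω → ℕ)
    (hmeas : ∀ i, Measurable (X i))
    (hpos : ∀ i ω, 0 < X i ω)
    (hindep : iIndepFun X μ)
    (hident : ∀ i, IdentDistrib (X i) (X 1) μ μ)
    (hgcd : ∀ d : ℕ, (∀ x : ℕ, μ {ω | X 1 ω = x} ≠ 0 → d ∣ x) → d = 1)
    (hint : Integrable (fun ω => (X 1 ω : ℝ)) μ)
    (hmean : (∫ ω, (X 1 ω : ℝ) ∂μ) < 2)
    (W : ℕ → Ω → ℕ)
    (hW : ∀ n ω, W n ω = ∑ i ∈ Finset.Icc 1 n, X i ω) :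
    ∀ᵐ ω ∂μ, ∃ N : ℕ, ∀ m : ℕ, N ≤ m →
      ∃ i j : ℕ, 1 ≤ i ∧ 1 ≤ j ∧ i ≠ j ∧ W i ω + W j ω = m := by
  set Y : ℕ → Ω → ℝ := fun n ω => (X (n+1) ω : ℝ) with hY
  have hcast : Measurable (Nat.cast : ℕ → ℝ) := measurable_from_top
  have hindep' : Pairwise (Function.onFun (IndepFun · · μ) Y) := by
    intro i j hij
    exact (hindep.indepFun (show i+1 ≠ j+1 by omega)).comp hcast hcast
  have hident' : ∀ i, IdentDistrib (Y i) (Y 0) μ μ := by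
    intro i
    exact ((hident (i+1)).trans (hident 1).symm).comp hcast
  have hint' : Integrable (Y 0) μ := hint
  have hslln := strong_law_ae_real Y hint' hindep' hident'
  filter_upwards [hslln] with ω hω
  -- rewrite the sums
  have hWY : ∀ n, (W n ω : ℝ) = ∑ i ∈ Finset.range n, Y i ω := by
    intro n
    rw [hW n ω, Nat.cast_sum]
    rw [← Finset.Ico_add_one_right_eq_Icc, Finset.sum_Ico_eq_sum_range]
    simp [hY, add_comm]
  have hω' : Tendsto (fun n : ℕ => (W n ω : ℝ) / n) atTop (𝓝 (μ[Y 0])) := by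
    apply hω.congr
    intro n
    rw [hWY]
  set E := μ[Y 0] with hE
  have hE2 : E < 2 := hmean
  set c := (E + 2) / 2 with hc
  have hEc : E < c := by rw [hc]; linarith
  have hc2 : c < 2 := by rw [hc]; linarith
  -- eventually bound
  have hev : ∀ᶠ n in atTop, (W n ω : ℝ) / n < c :=
    Tendsto.eventually_lt_const hEc hω'
  obtain ⟨n1, hn1⟩ := eventually_atTop.mp hev
  set n0 := max n1 1 with hn0
  -- sequence facts
  have hsm : StrictMono (W · ω) := by
    apply strictMono_nat_of_lt_succ
    intro n
    rw [hW n ω, hW (n+1) ω, Finset.sum_Icc_succ_top (by omega : 1 ≤ n+1)]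
    have := hpos (n+1) ω
    omega
  have hge : ∀ n, n ≤ W n ω := by
    intro n
    rw [hW n ω]
    have h := Finset.card_nsmul_le_sum (Finset.Icc 1 n) (X · ω) 1 (fun i _ => hpos i ω)
    simp only [Nat.card_Icc, smul_eq_mul, mul_one] at h
    omega
  have hc0 : (0:ℝ) ≤ c := by
    have hE0 : (0:ℝ) ≤ E := by
      rw [hE]
      exact integral_nonneg fun ω => by positivity
    rw [hc]; linarith
  have hbound : ∀ n, n0 ≤ n → ((W n ω : ℕ) : ℝ) ≤ c * n := by
    intro n hn
    have h1 : (W n ω : ℝ) / n < c := hn1 n (le_trans (le_max_left _ _) hn)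
    have h2 : (0:ℝ) < n := by
      have : 1 ≤ n := le_trans (le_max_right _ _) hn
      exact_mod_cast this
    have := (div_lt_iff₀ h2).mp h1
    linarith
  obtain ⟨N, hN⟩ := key_det (W · ω) hsm hge c hc2 hc0 n0 (le_max_right _ _) hbound
  exact ⟨N, fun m hm => hN m hm⟩
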